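/- For E > 1, let γ₊(E) ∈ (1,∞) solve 1/q² + 2·ln q = E and set y₊ := ln γ₊(E). Then ∫₁^{γ₊(E)} dx / √(E − 1/x² − 2·ln x) ≤ (γ₊(E) / √(2 − (1 − e^{−2y₊})/y₊)) · ∫₀^{y₊} e^{−z} dz / √z. -/

import Mathlib

open MeasureTheory Set

/-- Upper bound for the main part of the period integral: with `y₊ = ln γ₊`,
`∫₁^{γ₊} dx/√(E − 1/x² − 2 ln x)
  ≤ (γ₊/√(2 − (1 − e^{−2y₊})/y₊)) ∫₀^{y₊} e^{−z}/√z dz`. -/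
theorem stmt_17 (E g : ℝ) (hE : 1 < E) (hg : 1 < g)
    (hroot : 1 / g ^ 2 + 2 * Real.log g = E) :
    (∫ x in (1:ℝ)..g, (Real.sqrt (E - 1 / x ^ 2 - 2 * Real.log x))⁻¹) ≤
      (g / Real.sqrt (2 - (1 - Real.exp (-2 * Real.log g)) / Real.log g)) *
        ∫ z in (0:ℝ)..(Real.log g), Real.exp (-z) / Real.sqrt z := by
  have hg0 : (0:ℝ) < g := lt_trans one_pos hg
  set L := Real.log g with hLdef
  have hL : 0 < L := Real.log_pos hg
  have hgL : Real.exp L = g := Real.exp_log hg0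
  have h1g : Real.exp (-2 * L) = 1 / g ^ 2 := by
    rw [show (-2:ℝ) * L = -(L + L) by ring, Real.exp_neg, Real.exp_add, hgL, one_div, sq]
  have hEeq : E = Real.exp (-2 * L) + 2 * L := by rw [h1g]; linarith [hroot]
  set c := (1 - Real.exp (-2 * L)) / L with hc
  set k := 2 - c with hkdef
  have hexp : -2 * L + 1 < Real.exp (-2 * L) := by
    have := Real.add_one_lt_exp (x := -2 * L) (by nlinarith)
    linarith
  have hc2 : c < 2 := by rw [hc, div_lt_iff₀ hL]; linarith
  have hk : 0 < k := by rw [hkdef]; linarith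
  have hsk : 0 < Real.sqrt k := Real.sqrt_pos.2 hk
  -- key pointwise inequality
  have hkey : ∀ x ∈ Ioo (1:ℝ) g, k * (L - Real.log x) ≤ E - 1 / x ^ 2 - 2 * Real.log x := by
    intro x hx
    have hx0 : 0 < x := lt_trans one_pos hx.1
    set y := Real.log x with hy
    have hy0 : 0 < y := Real.log_pos hx.1
    have hyL : y < L := Real.log_lt_log hx0 hx.2
    have h1x : 1 / x ^ 2 = Real.exp (-2 * y) := by
      rw [show (-2:ℝ) * y = -(y + y) by ring, Real.exp_neg, Real.exp_add, Real.exp_log hx0,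
        one_div, sq]
    have ha : 0 ≤ (L - y) / L := div_nonneg (by linarith) hL.le
    have hb : 0 ≤ y / L := div_nonneg hy0.le hL.le
    have hab : (L - y) / L + y / L = 1 := by field_simp; ring
    have hconv := convexOn_exp.2 (Set.mem_univ (0:ℝ)) (Set.mem_univ (-2 * L)) ha hb hab
    simp only [smul_eq_mul, mul_zero, Real.exp_zero, mul_one, zero_add] at hconv
    rw [show y / L * (-2 * L) = -2 * y by field_simp] at hconv
    have hconv' : Real.exp (-2 * y) * L ≤ (L - y) + y * Real.exp (-2 * L) := by
      have h := mul_le_mul_of_nonneg_right hconv hL.le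
      calc Real.exp (-2 * y) * L ≤ ((L - y) / L + y / L * Real.exp (-2 * L)) * L := h
        _ = (L - y) + y * Real.exp (-2 * L) := by field_simp
    rw [hEeq, h1x]
    have hcLy : c * L * (L - y) = (1 - Real.exp (-2 * L)) * (L - y) := by
      rw [hc]; field_simp
    nlinarith [hconv', hcLy, hL, hyL, mul_pos hL (sub_pos.2 hyL)]
  -- comparison function
  set G : ℝ → ℝ := fun x => (Real.sqrt (k * (L - Real.log x)))⁻¹ with hG
  have hGle : ∀ x ∈ Ioo (1:ℝ) g,
      (Real.sqrt (E - 1 / x ^ 2 - 2 * Real.log x))⁻¹ ≤ G x := by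
    intro x hx
    have hx0 : 0 < x := lt_trans one_pos hx.1
    have hyL : Real.log x < L := Real.log_lt_log hx0 hx.2
    have hB : 0 < k * (L - Real.log x) := mul_pos hk (by linarith)
    have hsB : 0 < Real.sqrt (k * (L - Real.log x)) := Real.sqrt_pos.2 hB
    exact inv_anti₀ hsB (Real.sqrt_le_sqrt (hkey x hx))
  -- change of variables
  set φ : ℝ → ℝ := fun z => g * Real.exp (-z) with hφ
  have hderiv : ∀ z ∈ Ioo (0:ℝ) L, HasDerivWithinAt φ (-(g * Real.exp (-z))) (Ioo 0 L) z := by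
    intro z _
    have h1 : HasDerivAt (fun z : ℝ => Real.exp (-z)) (-Real.exp (-z)) z := by
      simpa [Function.comp_def] using (Real.hasDerivAt_exp (-z)).comp z ((hasDerivAt_id z).neg)
    have h2 := (h1.const_mul g)
    have h3 : HasDerivAt φ (-(g * Real.exp (-z))) z := by
      exact h2.congr_deriv (by ring)
    exact h3.hasDerivWithinAt
  have hinj : InjOn φ (Ioo 0 L) := by
    intro a _ b _ h
    have h1 : Real.exp (-a) = Real.exp (-b) := mul_left_cancel₀ (ne_of_gt hg0) h
    have := Real.exp_eq_exp.mp h1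
    linarith
  have himg : φ '' Ioo 0 L = Ioo 1 g := by
    ext x
    simp only [mem_image, mem_Ioo]
    constructor
    · rintro ⟨z, ⟨hz0, hzL⟩, rfl⟩
      have h2 : g * Real.exp (-L) = 1 := by
        rw [Real.exp_neg, hgL]; field_simp
      have h3 : Real.exp (-L) < Real.exp (-z) := Real.exp_lt_exp.2 (by linarith)
      have h4 : Real.exp (-z) < 1 := by
        rw [show (1:ℝ) = Real.exp 0 by simp]
        exact Real.exp_lt_exp.2 (by linarith)
      constructor
      · show (1:ℝ) < g * Real.exp (-z)
        nlinarith
      · show g * Real.exp (-z) < g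
        nlinarith
    · rintro ⟨h1, h2⟩
      have hx0 : (0:ℝ) < x := lt_trans one_pos h1
      refine ⟨L - Real.log x, ⟨?_, ?_⟩, ?_⟩
      · have := Real.log_lt_log hx0 h2; linarith
      · have := Real.log_pos h1; linarith
      · show g * Real.exp (-(L - Real.log x)) = x
        rw [show -(L - Real.log x) = Real.log x + (-L) by ring, Real.exp_add, Real.exp_neg, hgL,
          Real.exp_log hx0]
        field_simp
  have hpt : ∀ z ∈ Ioo (0:ℝ) L,
      |(-(g * Real.exp (-z)))| • G (φ z) = (g / Real.sqrt k) * (Real.exp (-z) / Real.sqrt z) := by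
    intro z hz
    have hz0 : 0 < z := hz.1
    have hsz : 0 < Real.sqrt z := Real.sqrt_pos.2 hz0
    have hlogφ : Real.log (φ z) = L - z := by
      show Real.log (g * Real.exp (-z)) = L - z
      rw [Real.log_mul (ne_of_gt hg0) (Real.exp_ne_zero _), Real.log_exp]; ring
    have hGφ : G (φ z) = (Real.sqrt k * Real.sqrt z)⁻¹ := by
      show (Real.sqrt (k * (L - Real.log (φ z))))⁻¹ = _
      rw [hlogφ, show L - (L - z) = z by ring, Real.sqrt_mul hk.le]
    rw [abs_neg, abs_of_nonneg (by positivity), smul_eq_mul, hGφ]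
    show g * Real.exp (-z) * (Real.sqrt k * Real.sqrt z)⁻¹ = _
    field_simp
  have hchg : ∫ x in Ioo (1:ℝ) g, G x
      = ∫ z in Ioo (0:ℝ) L, (g / Real.sqrt k) * (Real.exp (-z) / Real.sqrt z) := by
    rw [← himg, integral_image_eq_integral_abs_deriv_smul measurableSet_Ioo hderiv hinj G]
    exact setIntegral_congr_fun measurableSet_Ioo fun z hz => hpt z hz
  -- integrability
  have hint0 : IntegrableOn (fun z => (g / Real.sqrt k) * (Real.exp (-z) / Real.sqrt z))
      (Ioo 0 L) := by
    have hb : IntegrableOn (fun z : ℝ => z ^ (-(1/2):ℝ)) (Ioo 0 L) := by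
      have h := intervalIntegral.intervalIntegrable_rpow' (a := 0) (b := L)
        (r := -(1/2)) (by norm_num)
      rwa [intervalIntegrable_iff_integrableOn_Ioo_of_le hL.le] at h
    apply Integrable.mono' (hb.const_mul (g / Real.sqrt k))
    · exact (measurable_const.mul ((Real.measurable_exp.comp measurable_neg).div
        Real.continuous_sqrt.measurable)).aestronglyMeasurable
    · filter_upwards [ae_restrict_mem measurableSet_Ioo] with z hz
      have hz0 : 0 < z := hz.1
      have hsz : 0 < Real.sqrt z := Real.sqrt_pos.2 hz0
      rw [Real.norm_eq_abs, abs_of_nonneg (by positivity)]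
      have h1 : Real.exp (-z) ≤ 1 := Real.exp_le_one_iff.mpr (by linarith)
      have h3 : z ^ (-(1/2):ℝ) = (Real.sqrt z)⁻¹ := by
        rw [Real.rpow_neg hz0.le, Real.sqrt_eq_rpow]
      rw [h3]
      have h4 : Real.exp (-z) / Real.sqrt z ≤ (Real.sqrt z)⁻¹ := by
        rw [div_eq_mul_inv]
        exact mul_le_of_le_one_left (inv_nonneg.2 hsz.le) h1
      have h5 : 0 ≤ g / Real.sqrt k := by positivity
      exact mul_le_mul_of_nonneg_left h4 h5
  have hGint : IntegrableOn G (Ioo 1 g) := by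
    rw [← himg, integrableOn_image_iff_integrableOn_abs_deriv_smul measurableSet_Ioo hderiv hinj]
    exact hint0.congr_fun (fun z hz => (hpt z hz).symm) measurableSet_Ioo
  -- assemble
  calc (∫ x in (1:ℝ)..g, (Real.sqrt (E - 1 / x ^ 2 - 2 * Real.log x))⁻¹)
      = ∫ x in Ioo (1:ℝ) g, (Real.sqrt (E - 1 / x ^ 2 - 2 * Real.log x))⁻¹ := by
        rw [intervalIntegral.integral_of_le hg.le, integral_Ioc_eq_integral_Ioo]
    _ ≤ ∫ x in Ioo (1:ℝ) g, G x := by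
        apply integral_mono_of_nonneg
        · exact Filter.Eventually.of_forall fun x => by positivity
        · exact hGint
        · filter_upwards [ae_restrict_mem measurableSet_Ioo] with x hx
          exact hGle x hx
    _ = (g / Real.sqrt k) * ∫ z in (0:ℝ)..L, Real.exp (-z) / Real.sqrt z := by
        rw [hchg, intervalIntegral.integral_of_le hL.le, integral_Ioc_eq_integral_Ioo,
          ← integral_const_mul]
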